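/- Let D be a finite reflexive digraph. The avoidance class Av(D) within all finite reflexive digraphs under the surjective homomorphism ordering is well quasi-ordered if and only if D is isomorphic to a partial subcomplete digraph N⃗_{n,k} with 2k < n. -/

import Mathlib

/-- A finite structure with a single binary relation (digraph/graph model). -/
structure FinBinRel where
  n : ℕ
  rel : Fin n → Fin n → Prop

/-- `f` is a homomorphism from `A` to `B`: it maps related pairs to related pairs. -/
def IsHom (A B : FinBinRel) (f : Fin A.n → Fin B.n) : Prop :=
  ∀ x y, A.rel x y → B.rel (f x) (f y)

/-- `f` is a strong homomorphism: a homomorphism such that every related pair of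
elements of the image is the image of a related pair. -/
def IsStrongHom (A B : FinBinRel) (f : Fin A.n → Fin B.n) : Prop :=
  IsHom A B f ∧
    ∀ p q : Fin B.n, B.rel p q → (∃ a, f a = p) → (∃ b, f b = q) →
      ∃ u v, A.rel u v ∧ f u = p ∧ f v = q

/-- Homomorphic image ordering: `A ⪯ B` iff there is a surjective homomorphism `B → A`. -/
def HomLe (A B : FinBinRel) : Prop :=
  ∃ f : Fin B.n → Fin A.n, Function.Surjective f ∧ IsHom B A f

/-- Strong homomorphic image ordering: `A ⪯ B` iff there is a surjective strong
homomorphism `B → A`. -/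
def StrongLe (A B : FinBinRel) : Prop :=
  ∃ f : Fin B.n → Fin A.n, Function.Surjective f ∧ IsStrongHom B A f

/-- Isomorphism of binary relational structures. -/
def BinIso (A B : FinBinRel) : Prop :=
  ∃ e : Fin A.n ≃ Fin B.n, ∀ x y, A.rel x y ↔ B.rel (e x) (e y)

/-- A class `C` is well quasi-ordered by `r`: every infinite sequence of members of `C`
contains a "good pair". (For orderings on finite structures respecting size this is
equivalent to having no infinite antichain.) -/
def IsWqo (r : FinBinRel → FinBinRel → Prop) (C : Set FinBinRel) : Prop :=
  ∀ f : ℕ → FinBinRel, (∀ i, f i ∈ C) → ∃ i j, i < j ∧ r (f i) (f j)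

/-- A reflexive graph: symmetric relation with a loop at every vertex. -/
def ReflGraph (A : FinBinRel) : Prop :=
  (∀ x, A.rel x x) ∧ (∀ x y, A.rel x y → A.rel y x)

/-- An irreflexive graph: symmetric and loopless. -/
def IrrGraph (A : FinBinRel) : Prop :=
  (∀ x, ¬ A.rel x x) ∧ (∀ x y, A.rel x y → A.rel y x)

/-- The irreflexive complete graph on `n` vertices. -/
def Kirr (n : ℕ) : FinBinRel := ⟨n, fun i j => i ≠ j⟩

/-- The complete reflexive graph/digraph on `n` vertices (all pairs, including loops). -/
def Kcompl (n : ℕ) : FinBinRel := ⟨n, fun _ _ => True⟩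

/-- The subcomplete reflexive graph `N_{n,k}` (for `2k ≤ n`): the complete reflexive
graph on `n` vertices with the `k` disjoint edges `{0,1},{2,3},…,{2k-2,2k-1}` deleted. -/
def Ngraph (n k : ℕ) : FinBinRel :=
  ⟨n, fun i j => ¬ ∃ m, m < k ∧
      ((i.val = 2 * m ∧ j.val = 2 * m + 1) ∨ (j.val = 2 * m ∧ i.val = 2 * m + 1))⟩

/-- The subcomplete digraph `N⃗_{n,k}` (for `2k ≤ n`): the complete reflexive digraph
on `n` vertices with the `k` disjoint directed edges `(0,1),(2,3),…,(2k-2,2k-1)` removed. -/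
def Ndigraph (n k : ℕ) : FinBinRel :=
  ⟨n, fun i j => ¬ ∃ m, m < k ∧ i.val = 2 * m ∧ j.val = 2 * m + 1⟩

/-- `D` has a set of `k` pairwise disjoint edges (all `2k` endpoints distinct). -/
def HasDisjointEdges (D : FinBinRel) (k : ℕ) : Prop :=
  ∃ a b : Fin k → Fin D.n,
    Function.Injective (Sum.elim a b) ∧ ∀ i, D.rel (a i) (b i)

/- ===================== Auxiliary development ===================== -/

open Function

section Aux

/-- transfer of `HomLe` along isomorphism in the first argument -/
lemma homLe_congr_left {A B : FinBinRel} (h : BinIso A B) (E : FinBinRel) :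
    HomLe A E ↔ HomLe B E := by
  obtain ⟨e, he⟩ := h
  constructor
  · rintro ⟨f, hf, hhom⟩
    exact ⟨fun x => e (f x), (e.surjective).comp hf, fun x y hxy => (he _ _).1 (hhom x y hxy)⟩
  · rintro ⟨f, hf, hhom⟩
    exact ⟨fun x => e.symm (f x), (e.symm.surjective).comp hf, fun x y hxy => by
      have := hhom x y hxy
      have h2 := (he (e.symm (f x)) (e.symm (f y))).2
      simp only [Equiv.apply_symm_apply] at h2
      exact h2 this⟩

/-- the reflexive complement of a directed `m`-cycle together with one complete vertex -/
def Cyc (m : ℕ) : FinBinRel :=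
  ⟨m + 1, fun i j => ¬ (i.val < m ∧ j.val < m ∧ (i.val + 1) % m = j.val)⟩

lemma cyc_refl {m : ℕ} (hm : 2 ≤ m) : ∀ x, (Cyc m).rel x x := by
  rintro x ⟨h1, h2, h3⟩
  have : x.val + 1 < m ∨ x.val + 1 = m := by omega
  rcases this with h | h
  · rw [Nat.mod_eq_of_lt h] at h3; omega
  · rw [h, Nat.mod_self] at h3; omega

lemma succ_mod_inj {m a b : ℕ} (ha : a < m) (hb : b < m) (h : (a + 1) % m = (b + 1) % m) :
    a = b := by
  rcases Nat.lt_or_ge (a+1) m with h1 | h1 <;> rcases Nat.lt_or_ge (b+1) m with h2 | h2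
  · rw [Nat.mod_eq_of_lt h1, Nat.mod_eq_of_lt h2] at h; omega
  · have hb1 : b + 1 = m := by omega
    rw [Nat.mod_eq_of_lt h1, hb1, Nat.mod_self] at h; omega
  · have ha1 : a + 1 = m := by omega
    rw [Nat.mod_eq_of_lt h2, ha1, Nat.mod_self] at h; omega
  · omega

lemma cyc_avoid1 {D : FinBinRel} (m : ℕ)
    (h : ∃ x y y', y ≠ y' ∧ ¬ D.rel x y ∧ ¬ D.rel x y') :
    ¬ HomLe D (Cyc m) := by
  rintro ⟨f, hf, hhom⟩
  obtain ⟨x, y, y', hne, hxy, hxy'⟩ := h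
  obtain ⟨u, hu⟩ := hf x
  obtain ⟨v, hv⟩ := hf y
  obtain ⟨v', hv'⟩ := hf y'
  have h1 : ¬ (Cyc m).rel u v := fun hr => hxy (by rw [← hu, ← hv]; exact hhom _ _ hr)
  have h2 : ¬ (Cyc m).rel u v' := fun hr => hxy' (by rw [← hu, ← hv']; exact hhom _ _ hr)
  simp only [Cyc, not_not] at h1 h2
  obtain ⟨hu1, hv1, he1⟩ := h1
  obtain ⟨hu2, hv2, he2⟩ := h2
  apply hne
  rw [← hv, ← hv']
  congr 1
  apply Fin.ext
  omega

lemma cyc_avoid2 {D : FinBinRel} {m : ℕ}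
    (h : ∃ x y y', y ≠ y' ∧ ¬ D.rel y x ∧ ¬ D.rel y' x) :
    ¬ HomLe D (Cyc m) := by
  rintro ⟨f, hf, hhom⟩
  obtain ⟨x, y, y', hne, hxy, hxy'⟩ := h
  obtain ⟨u, hu⟩ := hf x
  obtain ⟨v, hv⟩ := hf y
  obtain ⟨v', hv'⟩ := hf y'
  have h1 : ¬ (Cyc m).rel v u := fun hr => hxy (by rw [← hu, ← hv]; exact hhom _ _ hr)
  have h2 : ¬ (Cyc m).rel v' u := fun hr => hxy' (by rw [← hu, ← hv']; exact hhom _ _ hr)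
  simp only [Cyc, not_not] at h1 h2
  obtain ⟨hv1, hu1, he1⟩ := h1
  obtain ⟨hv2, hu2, he2⟩ := h2
  apply hne
  rw [← hv, ← hv']
  congr 1
  apply Fin.ext
  exact succ_mod_inj hv1 hv2 (by rw [he1, he2])

lemma cyc_avoid4 {D : FinBinRel} {m : ℕ}
    (h : ∀ x, ∃ y, ¬ D.rel x y ∨ ¬ D.rel y x) :
    ¬ HomLe D (Cyc m) := by
  rintro ⟨f, hf, hhom⟩
  set c : Fin (m+1) := ⟨m, Nat.lt_succ_self m⟩ with hc
  obtain ⟨y, hy⟩ := h (f c)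
  obtain ⟨v, hv⟩ := hf y
  have h1 : (Cyc m).rel c v := by
    rintro ⟨hlt, -, -⟩; simp [hc] at hlt
  have h2 : (Cyc m).rel v c := by
    rintro ⟨hlt, hlt2, -⟩; simp [hc] at hlt2
  rcases hy with hy | hy
  · exact hy (by rw [← hv]; exact hhom _ _ h1)
  · exact hy (by rw [← hv]; exact hhom _ _ h2)

lemma cyc_antichain {m m' : ℕ} (hm : 2 ≤ m) (hlt : m < m') :
    ¬ HomLe (Cyc m) (Cyc m') := by
  rintro ⟨f, hf, hhom⟩
  have hmlt : ∀ i : ℕ, i % m < m + 1 := fun i => Nat.lt_succ_of_lt (Nat.mod_lt _ (by omega))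
  have pre : ∀ c : Fin (m + 1), ∃ u : Fin (m' + 1), f u = c := hf
  set x : ℕ → Fin (m' + 1) := fun i => Classical.choose (pre ⟨i % m, hmlt i⟩) with hx
  have hfx : ∀ i, f (x i) = ⟨i % m, hmlt i⟩ := fun i => Classical.choose_spec (pre ⟨i % m, hmlt i⟩)
  have hS : ∀ i : ℕ, (x i).val < m' ∧ (x (i+1)).val < m' ∧ ((x i).val + 1) % m' = (x (i+1)).val := by
    intro i
    have hB : ¬ (Cyc m).rel ⟨i % m, hmlt i⟩ ⟨(i+1) % m, hmlt (i+1)⟩ := by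
      simp only [Cyc, not_not]
      refine ⟨Nat.mod_lt _ (by omega), Nat.mod_lt _ (by omega), ?_⟩
      show (i % m + 1) % m = (i + 1) % m
      rw [Nat.add_mod i 1 m, Nat.mod_eq_of_lt (show 1 < m by omega)]
    have hA : ¬ (Cyc m').rel (x i) (x (i+1)) := by
      intro hr
      exact hB (by rw [← hfx i, ← hfx (i+1)]; exact hhom _ _ hr)
    simpa only [Cyc, not_not] using hA
  have key : ∀ i : ℕ, (x i).val = ((x 0).val + i) % m' := by
    intro i
    induction i with
    | zero =>
      simp only [Nat.add_zero]
      exact (Nat.mod_eq_of_lt (hS 0).1).symm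
    | succ i ih =>
      have h2 := (hS i).2.2
      rw [ih, Nat.mod_add_mod] at h2
      rw [← h2]
      congr 1
  have hxm : x m = x 0 := by
    have harg : (⟨m % m, hmlt m⟩ : Fin (m + 1)) = ⟨0 % m, hmlt 0⟩ :=
      Fin.ext (by simp [Nat.mod_self])
    exact congrArg (fun c : Fin (m + 1) => Classical.choose (pre c)) harg
  have h0 := key m
  rw [hxm] at h0
  have hdvd : m' ∣ m := by
    have h1 : (x 0).val + m ≡ (x 0).val + 0 [MOD m'] := by
      unfold Nat.ModEq
      simp only [Nat.add_zero]
      rw [Nat.mod_eq_of_lt (hS 0).1]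
      exact h0.symm
    have h2 : m ≡ 0 [MOD m'] := Nat.ModEq.add_left_cancel' _ h1
    exact (Nat.modEq_zero_iff_dvd).1 h2
  have := Nat.le_of_dvd (by omega) hdvd
  omega

/-- alternating cycle of length `2m` (reflexive complement) -/
def AltCyc (m : ℕ) : FinBinRel :=
  ⟨2 * m, fun i j => ¬ (i.val % 2 = 0 ∧
      (j.val = i.val + 1 ∨ i.val = j.val + 1 ∨ (i.val = 0 ∧ j.val = 2 * m - 1)))⟩

lemma altCyc_refl {m : ℕ} (hm : 1 ≤ m) : ∀ x, (AltCyc m).rel x x := by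
  rintro x ⟨h1, h2⟩
  have h3 : x.val < 2 * m := x.isLt
  omega

lemma altCyc_avoid3 {D : FinBinRel} {m : ℕ} (hm : 1 ≤ m)
    (h : ∃ x y z, ¬ D.rel x y ∧ ¬ D.rel z x) :
    ¬ HomLe D (AltCyc m) := by
  rintro ⟨f, hf, hhom⟩
  obtain ⟨x, y, z, hxy, hzx⟩ := h
  obtain ⟨u, hu⟩ := hf x
  obtain ⟨v, hv⟩ := hf y
  obtain ⟨w, hw⟩ := hf z
  have h1 : ¬ (AltCyc m).rel u v := fun hr => hxy (by rw [← hu, ← hv]; exact hhom _ _ hr)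
  have h2 : ¬ (AltCyc m).rel w u := fun hr => hzx (by rw [← hu, ← hw]; exact hhom _ _ hr)
  simp only [AltCyc, not_not] at h1 h2
  have hu2 : u.val < 2 * m := u.isLt
  have hw2 : w.val < 2 * m := w.isLt
  omega

lemma altCyc_core {M a a' b b' : ℕ} (hM : 3 ≤ M)
    (haa : a ≠ a') (hbb : b ≠ b')
    (h1 : a % 2 = 0 ∧ (b = a + 1 ∨ a = b + 1 ∨ (a = 0 ∧ b = 2 * M - 1)))
    (h2 : a % 2 = 0 ∧ (b' = a + 1 ∨ a = b' + 1 ∨ (a = 0 ∧ b' = 2 * M - 1)))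
    (h3 : a' % 2 = 0 ∧ (b = a' + 1 ∨ a' = b + 1 ∨ (a' = 0 ∧ b = 2 * M - 1)))
    (h4 : a' % 2 = 0 ∧ (b' = a' + 1 ∨ a' = b' + 1 ∨ (a' = 0 ∧ b' = 2 * M - 1))) :
    False := by
  obtain ⟨he1, h1⟩ := h1
  obtain ⟨-, h2⟩ := h2
  obtain ⟨he3, h3⟩ := h3
  obtain ⟨-, h4⟩ := h4
  rcases h1 with h1 | h1 | ⟨h1a, h1b⟩ <;> rcases h2 with h2 | h2 | ⟨h2a, h2b⟩ <;>
    rcases h3 with h3 | h3 | ⟨h3a, h3b⟩ <;> rcases h4 with h4 | h4 | ⟨h4a, h4b⟩ <;> omega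

lemma altCyc_antichain {m m' : ℕ} (hm : 3 ≤ m) (hlt : m < m') :
    ¬ HomLe (AltCyc m) (AltCyc m') := by
  rintro ⟨f, hf, hhom⟩
  have hm' : 3 ≤ m' := by omega
  -- the pulled-back "edge" relation
  have pull : ∀ (p q : Fin (2*m)) (u v : Fin (2*m')),
      f u = p → f v = q →
      (p.val % 2 = 0 ∧ (q.val = p.val + 1 ∨ p.val = q.val + 1 ∨ (p.val = 0 ∧ q.val = 2*m - 1))) →
      (u.val % 2 = 0 ∧ (v.val = u.val + 1 ∨ u.val = v.val + 1 ∨ (u.val = 0 ∧ v.val = 2*m' - 1))) := by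
    intro p q u v hu hv hpq
    have hB : ¬ (AltCyc m).rel p q := by simp only [AltCyc, not_not]; exact hpq
    have hA : ¬ (AltCyc m').rel u v := fun hr => hB (by rw [← hu, ← hv]; exact hhom _ _ hr)
    simpa only [AltCyc, not_not] using hA
  -- injectivity of f
  have hinj : Function.Injective f := by
    intro u u' huu
    by_contra hne
    set p := f u with hp
    have hu' : f u' = p := huu.symm
    have hpl : p.val < 2 * m := p.isLt
    rcases Nat.even_or_odd p.val with hpar | hpar
    · -- p even: two out-neighbours
      rw [Nat.even_iff] at hpar
      have hq1 : p.val + 1 < 2*m := by omega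
      set q1 : Fin (2*m) := ⟨p.val + 1, by omega⟩ with hq1d
      have hq2ex : ∃ q2 : Fin (2*m), q2 ≠ q1 ∧
          (p.val % 2 = 0 ∧ (q2.val = p.val + 1 ∨ p.val = q2.val + 1 ∨ (p.val = 0 ∧ q2.val = 2*m - 1))) := by
        by_cases hp0 : p.val = 0
        · refine ⟨⟨2*m - 1, by omega⟩, ?_, ?_⟩
          · intro hcon
            have := congrArg Fin.val hcon
            simp only [hq1d, Fin.val_mk] at this
            omega
          · constructor
            · omega
            · right; right; exact ⟨hp0, rfl⟩
        · refine ⟨⟨p.val - 1, by omega⟩, ?_, ?_⟩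
          · intro hcon
            have := congrArg Fin.val hcon
            simp only [hq1d, Fin.val_mk] at this
            omega
          · constructor
            · omega
            · right; left; simp only [Fin.val_mk]; omega
      obtain ⟨q2, hq21, hq2e⟩ := hq2ex
      obtain ⟨v1, hv1⟩ := hf q1
      obtain ⟨v2, hv2⟩ := hf q2
      have hv12 : v1.val ≠ v2.val := by
        intro hcon
        apply hq21
        rw [← hv2, ← hv1]
        congr 1
        exact Fin.ext hcon.symm
      have e1 := pull p q1 u v1 hp.symm hv1 ⟨by omega, Or.inl rfl⟩
      have e2 := pull p q1 u' v1 hu' hv1 ⟨by omega, Or.inl rfl⟩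
      have e3 := pull p q2 u v2 hp.symm hv2 hq2e
      have e4 := pull p q2 u' v2 hu' hv2 hq2e
      exact altCyc_core (a := u.val) (a' := u'.val) (b := v1.val) (b' := v2.val) hm'
        (fun hcon => hne (Fin.ext hcon)) hv12 e1 e3 e2 e4
    · -- p odd: two in-neighbours
      have hodd : p.val % 2 = 1 := Nat.odd_iff.1 hpar
      set q1 : Fin (2*m) := ⟨p.val - 1, by omega⟩ with hq1d
      have hq1e : q1.val % 2 = 0 ∧ (p.val = q1.val + 1 ∨ q1.val = p.val + 1 ∨ (q1.val = 0 ∧ p.val = 2*m - 1)) := by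
        constructor
        · simp only [hq1d, Fin.val_mk]; omega
        · left; simp only [hq1d, Fin.val_mk]; omega
      have hq2ex : ∃ q2 : Fin (2*m), q2 ≠ q1 ∧
          (q2.val % 2 = 0 ∧ (p.val = q2.val + 1 ∨ q2.val = p.val + 1 ∨ (q2.val = 0 ∧ p.val = 2*m - 1))) := by
        by_cases hpm : p.val = 2*m - 1
        · refine ⟨⟨0, by omega⟩, ?_, ?_⟩
          · intro hcon
            have := congrArg Fin.val hcon
            simp only [hq1d, Fin.val_mk] at this
            omega
          · exact ⟨by simp only [Fin.val_mk], Or.inr (Or.inr ⟨rfl, hpm⟩)⟩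
        · refine ⟨⟨p.val + 1, by omega⟩, ?_, ?_⟩
          · intro hcon
            have := congrArg Fin.val hcon
            simp only [hq1d, Fin.val_mk] at this
            omega
          · exact ⟨by simp only [Fin.val_mk]; omega, Or.inr (Or.inl rfl)⟩
      obtain ⟨q2, hq21, hq2e⟩ := hq2ex
      obtain ⟨v1, hv1⟩ := hf q1
      obtain ⟨v2, hv2⟩ := hf q2
      have hv12 : v1.val ≠ v2.val := by
        intro hcon
        apply hq21
        rw [← hv2, ← hv1]
        congr 1
        exact Fin.ext hcon.symm
      -- edges v1 → p, v2 → p pulled back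
      have e1 := pull q1 p v1 u hv1 hp.symm hq1e
      have e2 := pull q1 p v1 u' hv1 hu' hq1e
      have e3 := pull q2 p v2 u hv2 hp.symm hq2e
      have e4 := pull q2 p v2 u' hv2 hu' hq2e
      exact altCyc_core (a := v1.val) (a' := v2.val) (b := u.val) (b' := u'.val) hm'
        hv12 (fun hcon => hne (Fin.ext hcon)) e1 e2 e3 e4
  have hcard := Fintype.card_le_of_injective f hinj
  simp only [Fintype.card_fin] at hcard
  have h2m : 2 * m' ≤ 2 * m := hcard
  omega

end Aux

section Iso

lemma build_iso (D : FinBinRel) (hD : ∀ x : Fin D.n, D.rel x x)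
    (h1 : ¬ ∃ x y y', y ≠ y' ∧ ¬ D.rel x y ∧ ¬ D.rel x y')
    (h2 : ¬ ∃ x y y', y ≠ y' ∧ ¬ D.rel y x ∧ ¬ D.rel y' x)
    (h3 : ¬ ∃ x y z, ¬ D.rel x y ∧ ¬ D.rel z x)
    (h4 : ¬ ∀ x, ∃ y, ¬ D.rel x y ∨ ¬ D.rel y x) :
    ∃ n k, 2 * k < n ∧ BinIso D (Ndigraph n k) := by
  classical
  have huniq_t : ∀ x y y', ¬ D.rel x y → ¬ D.rel x y' → y = y' := by
    intro x y y' hxy hxy'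
    by_contra hne
    exact h1 ⟨x, y, y', hne, hxy, hxy'⟩
  have huniq_s : ∀ x y y', ¬ D.rel y x → ¬ D.rel y' x → y = y' := by
    intro x y y' hxy hxy'
    by_contra hne
    exact h2 ⟨x, y, y', hne, hxy, hxy'⟩
  have hst : ∀ x y z, ¬ D.rel x y → ¬ D.rel z x → False := by
    intro x y z hxy hzx
    exact h3 ⟨x, y, z, hxy, hzx⟩
  push_neg at h4
  obtain ⟨c, hc⟩ := h4
  set S : Finset (Fin D.n) := Finset.univ.filter (fun x => ∃ y, ¬ D.rel x y) with hSdef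
  set T : Finset (Fin D.n) := Finset.univ.filter (fun x => ∃ z, ¬ D.rel z x) with hTdef
  set R : Finset (Fin D.n) :=
    Finset.univ.filter (fun x => (∀ y, D.rel x y) ∧ ∀ z, D.rel z x) with hRdef
  have hmemS : ∀ x, x ∈ S ↔ ∃ y, ¬ D.rel x y := by
    intro x; simp [hSdef]
  have hmemT : ∀ x, x ∈ T ↔ ∃ z, ¬ D.rel z x := by
    intro x; simp [hTdef]
  have hmemR : ∀ x, x ∈ R ↔ (∀ y, D.rel x y) ∧ ∀ z, D.rel z x := by
    intro x; simp [hRdef]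
  set k := S.card with hk
  set r := R.card with hr
  -- T and S have the same size
  have hTS : S.card = T.card := by
    refine Finset.card_bij (fun x hx => Classical.choose ((hmemS x).1 hx)) ?_ ?_ ?_
    · intro a ha
      have hspec := Classical.choose_spec ((hmemS a).1 ha)
      exact (hmemT _).2 ⟨a, hspec⟩
    · intro a1 ha1 a2 ha2 heq
      have heq' : Classical.choose ((hmemS a1).1 ha1) = Classical.choose ((hmemS a2).1 ha2) := heq
      have hs1 := Classical.choose_spec ((hmemS a1).1 ha1)
      have hs2 := Classical.choose_spec ((hmemS a2).1 ha2)
      rw [heq'] at hs1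
      exact huniq_s _ a1 a2 hs1 hs2
    · intro b hb
      obtain ⟨z, hz⟩ := (hmemT b).1 hb
      have hzS : z ∈ S := (hmemS z).2 ⟨b, hz⟩
      have hspec := Classical.choose_spec ((hmemS z).1 hzS)
      exact ⟨z, hzS, huniq_t z _ b hspec hz⟩
  -- the three sets partition the universe
  have hdisjST : Disjoint S T := by
    rw [Finset.disjoint_left]
    intro x hxS hxT
    obtain ⟨y, hy⟩ := (hmemS x).1 hxS
    obtain ⟨z, hz⟩ := (hmemT x).1 hxT
    exact hst x y z hy hz
  have hdisjSTR : Disjoint (S ∪ T) R := by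
    rw [Finset.disjoint_left]
    intro x hxU hxR
    obtain ⟨hR1, hR2⟩ := (hmemR x).1 hxR
    rcases Finset.mem_union.1 hxU with hxS | hxT
    · obtain ⟨y, hy⟩ := (hmemS x).1 hxS
      exact hy (hR1 y)
    · obtain ⟨z, hz⟩ := (hmemT x).1 hxT
      exact hz (hR2 z)
  have hunion : (Finset.univ : Finset (Fin D.n)) = (S ∪ T) ∪ R := by
    ext x
    simp only [Finset.mem_univ, true_iff, Finset.mem_union]
    by_cases hs : ∃ y, ¬ D.rel x y
    · exact Or.inl (Or.inl ((hmemS x).2 hs))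
    · by_cases ht : ∃ z, ¬ D.rel z x
      · exact Or.inl (Or.inr ((hmemT x).2 ht))
      · push_neg at hs ht
        exact Or.inr ((hmemR x).2 ⟨hs, ht⟩)
  have hcards : D.n = k + k + r := by
    have h1 := Finset.card_union_of_disjoint hdisjSTR
    have h2' := Finset.card_union_of_disjoint hdisjST
    have h3' : (Finset.univ : Finset (Fin D.n)).card = D.n := by
      simp [Finset.card_univ]
    rw [hunion, h1, h2', ← hTS] at h3'
    omega
  have hcR : c ∈ R := (hmemR c).2 ⟨fun y => (hc y).1, fun z => (hc z).2⟩
  have hrpos : 1 ≤ r := by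
    rw [hr]
    exact Finset.card_pos.2 ⟨c, hcR⟩
  have hkn : 2 * k < D.n := by omega
  set σ : {x // x ∈ S} ≃ Fin k := S.equivFin with hσ
  set ρ : {x // x ∈ R} ≃ Fin r := R.equivFin with hρ
  -- the map
  set g : Fin D.n → Fin D.n := fun x =>
    if hs : ∃ y, ¬ D.rel x y then
      ⟨2 * (σ ⟨x, (hmemS x).2 hs⟩).val, by
        have := (σ ⟨x, (hmemS x).2 hs⟩).isLt; omega⟩
    else if ht : ∃ z, ¬ D.rel z x then
      ⟨2 * (σ ⟨Classical.choose ht, (hmemS _).2 ⟨x, Classical.choose_spec ht⟩⟩).val + 1, by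
        have := (σ ⟨Classical.choose ht, (hmemS _).2 ⟨x, Classical.choose_spec ht⟩⟩).isLt
        omega⟩
    else
      ⟨k + k + (ρ ⟨x, (hmemR x).2 (by push_neg at hs ht; exact ⟨hs, ht⟩)⟩).val, by
        have := (ρ ⟨x, (hmemR x).2 (by push_neg at hs ht; exact ⟨hs, ht⟩)⟩).isLt
        omega⟩
    with hgdef
  -- characterizations
  have hgS : ∀ x (hs : ∃ y, ¬ D.rel x y),
      (g x).val = 2 * (σ ⟨x, (hmemS x).2 hs⟩).val := by
    intro x hs
    simp only [hgdef, dif_pos hs]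
  have hgT : ∀ x (hns : ¬ ∃ y, ¬ D.rel x y) (ht : ∃ z, ¬ D.rel z x),
      ∃ (z : Fin D.n) (hzS : z ∈ S), ¬ D.rel z x ∧ (g x).val = 2 * (σ ⟨z, hzS⟩).val + 1 := by
    intro x hns ht
    refine ⟨Classical.choose ht, (hmemS _).2 ⟨x, Classical.choose_spec ht⟩,
      Classical.choose_spec ht, ?_⟩
    simp only [hgdef, dif_neg hns, dif_pos ht]
  have hgR : ∀ x (hns : ¬ ∃ y, ¬ D.rel x y) (hnt : ¬ ∃ z, ¬ D.rel z x),
      ∃ hxR : x ∈ R, (g x).val = k + k + (ρ ⟨x, hxR⟩).val := by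
    intro x hns hnt
    refine ⟨(hmemR x).2 (by push_neg at hns hnt; exact ⟨hns, hnt⟩), ?_⟩
    simp only [hgdef, dif_neg hns, dif_neg hnt]
  -- injectivity
  have hinj : Function.Injective g := by
    intro x1 x2 heq
    have hv : (g x1).val = (g x2).val := congrArg Fin.val heq
    by_cases hs1 : ∃ y, ¬ D.rel x1 y <;> by_cases hs2 : ∃ y, ¬ D.rel x2 y
    · -- S S
      rw [hgS x1 hs1, hgS x2 hs2] at hv
      have : σ ⟨x1, (hmemS x1).2 hs1⟩ = σ ⟨x2, (hmemS x2).2 hs2⟩ := Fin.ext (by omega)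
      have := σ.injective this
      exact congrArg Subtype.val this
    · -- x1 S, x2 T or R
      by_cases ht2 : ∃ z, ¬ D.rel z x2
      · obtain ⟨z, hzS, hzx, hval⟩ := hgT x2 hs2 ht2
        rw [hgS x1 hs1, hval] at hv
        omega
      · obtain ⟨hxR, hval⟩ := hgR x2 hs2 ht2
        rw [hgS x1 hs1, hval] at hv
        have := (σ ⟨x1, (hmemS x1).2 hs1⟩).isLt
        omega
    · -- x1 T or R, x2 S
      by_cases ht1 : ∃ z, ¬ D.rel z x1
      · obtain ⟨z, hzS, hzx, hval⟩ := hgT x1 hs1 ht1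
        rw [hgS x2 hs2, hval] at hv
        omega
      · obtain ⟨hxR, hval⟩ := hgR x1 hs1 ht1
        rw [hgS x2 hs2, hval] at hv
        have := (σ ⟨x2, (hmemS x2).2 hs2⟩).isLt
        omega
    · by_cases ht1 : ∃ z, ¬ D.rel z x1 <;> by_cases ht2 : ∃ z, ¬ D.rel z x2
      · -- T T
        obtain ⟨z1, hz1S, hz1x, hval1⟩ := hgT x1 hs1 ht1
        obtain ⟨z2, hz2S, hz2x, hval2⟩ := hgT x2 hs2 ht2
        rw [hval1, hval2] at hv
        have hσeq : σ ⟨z1, hz1S⟩ = σ ⟨z2, hz2S⟩ := Fin.ext (by omega)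
        have hz12 : z1 = z2 := congrArg Subtype.val (σ.injective hσeq)
        rw [hz12] at hz1x
        exact huniq_t z2 x1 x2 hz1x hz2x
      · -- T R
        obtain ⟨z1, hz1S, hz1x, hval1⟩ := hgT x1 hs1 ht1
        obtain ⟨hxR, hval2⟩ := hgR x2 hs2 ht2
        rw [hval1, hval2] at hv
        have := (σ ⟨z1, hz1S⟩).isLt
        omega
      · -- R T
        obtain ⟨hxR, hval1⟩ := hgR x1 hs1 ht1
        obtain ⟨z2, hz2S, hz2x, hval2⟩ := hgT x2 hs2 ht2
        rw [hval1, hval2] at hv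
        have := (σ ⟨z2, hz2S⟩).isLt
        omega
      · -- R R
        obtain ⟨hxR1, hval1⟩ := hgR x1 hs1 ht1
        obtain ⟨hxR2, hval2⟩ := hgR x2 hs2 ht2
        rw [hval1, hval2] at hv
        have : ρ ⟨x1, hxR1⟩ = ρ ⟨x2, hxR2⟩ := Fin.ext (by omega)
        exact congrArg Subtype.val (ρ.injective this)
  have hbij : Function.Bijective g := (Finite.injective_iff_bijective).1 hinj
  refine ⟨D.n, k, hkn, Equiv.ofBijective g hbij, ?_⟩
  intro x y
  show D.rel x y ↔ ¬ ∃ mm, mm < k ∧ (g x).val = 2 * mm ∧ (g y).val = 2 * mm + 1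
  constructor
  · rintro hrel ⟨mm, hmk, hex, hey⟩
    -- y must be in the T branch
    by_cases hsy : ∃ y', ¬ D.rel y y'
    · rw [hgS y hsy] at hey
      omega
    · by_cases hty : ∃ z, ¬ D.rel z y
      · obtain ⟨z, hzS, hzy, hvaly⟩ := hgT y hsy hty
        rw [hvaly] at hey
        -- x must be in the S branch
        by_cases hsx : ∃ y', ¬ D.rel x y'
        · rw [hgS x hsx] at hex
          have hσeq : σ ⟨x, (hmemS x).2 hsx⟩ = σ ⟨z, hzS⟩ := Fin.ext (by omega)
          have hxz : x = z := congrArg Subtype.val (σ.injective hσeq)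
          rw [← hxz] at hzy
          exact hzy hrel
        · by_cases htx : ∃ z, ¬ D.rel z x
          · obtain ⟨z', hz'S, hz'x, hvalx⟩ := hgT x hsx htx
            rw [hvalx] at hex
            omega
          · obtain ⟨hxR, hvalx⟩ := hgR x hsx htx
            rw [hvalx] at hex
            omega
      · obtain ⟨hyR, hvaly⟩ := hgR y hsy hty
        rw [hvaly] at hey
        omega
  · intro hnd
    by_contra hnrel
    have hsx : ∃ y', ¬ D.rel x y' := ⟨y, hnrel⟩
    have hsy : ¬ ∃ y', ¬ D.rel y y' := by
      rintro ⟨y', hy'⟩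
      exact hst y y' x hy' hnrel
    have hty : ∃ z, ¬ D.rel z y := ⟨x, hnrel⟩
    obtain ⟨z, hzS, hzy, hvaly⟩ := hgT y hsy hty
    have hzx : z = x := huniq_s y z x hzy hnrel
    subst hzx
    apply hnd
    exact ⟨(σ ⟨z, hzS⟩).val, (σ ⟨z, hzS⟩).isLt, hgS z hsx, hvaly⟩

end Iso

section Wqo
open Function

lemma subseq_mem (S : Set ℕ) (hS : S.Infinite) :
    ∃ φ : ℕ → ℕ, StrictMono φ ∧ ∀ i, φ i ∈ S := by
  classical
  haveI := hS.to_subtype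
  refine ⟨Nat.orderEmbeddingOfSet S, (Nat.orderEmbeddingOfSet S).strictMono, fun i => ?_⟩
  have h := Nat.orderEmbeddingOfSet_range S
  have h2 : (Nat.orderEmbeddingOfSet S) i ∈ Set.range ⇑(Nat.orderEmbeddingOfSet S) := ⟨i, rfl⟩
  rwa [h] at h2

lemma subseq_const {T : Type*} [Finite T] (c : ℕ → T) :
    ∃ (φ : ℕ → ℕ) (t : T), StrictMono φ ∧ ∀ i, c (φ i) = t := by
  obtain ⟨t, ht⟩ := Finite.exists_infinite_fiber c
  obtain ⟨φ, hφ, hmem⟩ := subseq_mem (c ⁻¹' {t}) (Set.infinite_coe_iff.mp ht)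
  exact ⟨φ, t, hφ, fun i => hmem i⟩

lemma subseq_mono (f : ℕ → ℕ) :
    ∃ φ : ℕ → ℕ, StrictMono φ ∧ ∀ i j, i ≤ j → f (φ i) ≤ f (φ j) := by
  have hpwo : (Set.univ : Set ℕ).IsPWO := (Set.isWF_univ_iff.mpr inferInstance).isPWO
  obtain ⟨g, hg⟩ := hpwo.exists_monotone_subseq (f := f) (fun _ => Set.mem_univ _)
  exact ⟨g, g.strictMono, fun i j h => hg h⟩

lemma subseq_mono_pi {T : Type*} [Finite T] (g : ℕ → T → ℕ) :
    ∃ φ : ℕ → ℕ, StrictMono φ ∧ ∀ t, ∀ i j, i ≤ j → g (φ i) t ≤ g (φ j) t := by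
  classical
  haveI := Fintype.ofFinite T
  suffices h : ∀ (L : Finset T), ∃ φ : ℕ → ℕ, StrictMono φ ∧
      ∀ t ∈ L, ∀ i j, i ≤ j → g (φ i) t ≤ g (φ j) t by
    obtain ⟨φ, h1, h2⟩ := h Finset.univ
    exact ⟨φ, h1, fun t => h2 t (Finset.mem_univ t)⟩
  intro L
  induction L using Finset.induction_on with
  | empty => exact ⟨id, strictMono_id, by simp⟩
  | @insert t0 L hni ih =>
    obtain ⟨φ, h1, h2⟩ := ih
    obtain ⟨ψ, hψ1, hψ2⟩ := subseq_mono (fun i => g (φ i) t0)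
    refine ⟨φ ∘ ψ, h1.comp hψ1, ?_⟩
    intro t htL i j hij
    rcases Finset.mem_insert.1 htL with rfl | htL'
    · exact hψ2 i j hij
    · exact h2 t htL' (ψ i) (ψ j) (hψ1.monotone hij)

lemma fin_surj (ca cb : ℕ) (h1 : cb ≤ ca) (h2 : cb = 0 → ca = 0) :
    ∃ f : Fin ca → Fin cb, Surjective f := by
  rcases Nat.eq_zero_or_pos cb with h | h
  · subst h
    have h0 : ca = 0 := h2 rfl
    subst h0
    exact ⟨fun x => x.elim0, fun y => y.elim0⟩
  · refine ⟨fun x => ⟨min x.val (cb - 1), by omega⟩, fun y => ⟨⟨y.val, by omega⟩, ?_⟩⟩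
    apply Fin.ext
    simp only [Fin.val_mk]
    have := y.isLt
    omega

lemma exists_surj_of_card {α β : Type*} [Finite α] [Finite β]
    (h1 : Nat.card β ≤ Nat.card α) (h2 : Nat.card β = 0 → Nat.card α = 0) :
    ∃ f : α → β, Surjective f := by
  obtain ⟨f0, hf0⟩ := fin_surj (Nat.card α) (Nat.card β) h1 h2
  have ea := Finite.equivFin α
  have eb := Finite.equivFin β
  exact ⟨fun a => eb.symm (f0 (ea a)),
    (eb.symm.surjective.comp hf0).comp ea.surjective⟩

lemma exists_surj_fiber {α β T : Type*} [Finite α] [Finite β] (τa : α → T) (τb : β → T)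
    (hle : ∀ t, Nat.card {b // τb b = t} ≤ Nat.card {a // τa a = t})
    (hz : ∀ t, Nat.card {b // τb b = t} = 0 → Nat.card {a // τa a = t} = 0) :
    ∃ H : α → β, Surjective H ∧ ∀ a, τb (H a) = τa a := by
  have hex : ∀ t, ∃ f : {a // τa a = t} → {b // τb b = t}, Surjective f :=
    fun t => exists_surj_of_card (hle t) (hz t)
  choose Hf hHf using hex
  refine ⟨fun a => (Hf (τa a) ⟨a, rfl⟩).val, ?_, fun a => (Hf (τa a) ⟨a, rfl⟩).prop⟩
  intro b
  obtain ⟨z, hzeq⟩ := hHf (τb b) ⟨b, rfl⟩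
  refine ⟨z.val, ?_⟩
  have hzp : τa z.val = τb b := z.prop
  have key : ∀ (t : T) (h : τa z.val = t),
      (Hf (τa z.val) ⟨z.val, rfl⟩).val = (Hf t ⟨z.val, h⟩).val := by
    intro t h
    cases h
    rfl
  calc (Hf (τa z.val) ⟨z.val, rfl⟩).val
      = (Hf (τb b) ⟨z.val, hzp⟩).val := key (τb b) hzp
    _ = b := congrArg Subtype.val hzeq

/-- `F` has `k` disjoint (directed) non-edges -/
def HDN (F : FinBinRel) (k : ℕ) : Prop :=
  ∃ a b : Fin k → Fin F.n, Function.Injective (Sum.elim a b) ∧ ∀ i, ¬ F.rel (a i) (b i)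

lemma sumElim_inj_iff {j : ℕ} {γ : Type*} (a b : Fin j → γ) :
    Function.Injective (Sum.elim a b) ↔
      (Function.Injective a ∧ Function.Injective b ∧ ∀ i i', a i ≠ b i') := by
  constructor
  · intro h
    refine ⟨fun i i' hii => ?_, fun i i' hii => ?_, fun i i' hii => ?_⟩
    · exact Sum.inl.inj
        (h (show Sum.elim a b (Sum.inl i) = Sum.elim a b (Sum.inl i') from hii))
    · exact Sum.inr.inj
        (h (show Sum.elim a b (Sum.inr i) = Sum.elim a b (Sum.inr i') from hii))
    · exact Sum.inl_ne_inr
        (h (show Sum.elim a b (Sum.inl i) = Sum.elim a b (Sum.inr i') from hii))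
  · rintro ⟨ha, hb, hab⟩ s t h
    cases s with
    | inl i =>
      cases t with
      | inl i' =>
        simp only [Sum.elim_inl] at h
        exact congrArg Sum.inl (ha h)
      | inr i' =>
        simp only [Sum.elim_inl, Sum.elim_inr] at h
        exact absurd h (hab i i')
    | inr i =>
      cases t with
      | inl i' =>
        simp only [Sum.elim_inl, Sum.elim_inr] at h
        exact absurd h.symm (hab i' i)
      | inr i' =>
        simp only [Sum.elim_inr] at h
        exact congrArg Sum.inr (hb h)

lemma exists_cover (F : FinBinRel) (k : ℕ) (hrefl : ∀ x, F.rel x x) (hnot : ¬ HDN F k) :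
    ∃ J, J < k ∧ ∃ w : Fin (J + J) → Fin F.n, Function.Injective w ∧
      ∀ x y, ¬ F.rel x y → (∃ p, w p = x) ∨ (∃ p, w p = y) := by
  classical
  have hP0 : HDN F 0 := by
    refine ⟨Fin.elim0, Fin.elim0, ?_, fun i => i.elim0⟩
    intro s t h
    cases s with
    | inl i => exact i.elim0
    | inr i => exact i.elim0
  set P : ℕ → Prop := fun j => HDN F j with hPdef
  set J := Nat.findGreatest P k with hJd
  have hPJ : P J := Nat.findGreatest_spec (Nat.zero_le k) hP0
  have hJle : J ≤ k := Nat.findGreatest_le k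
  have hJlt : J < k := lt_of_le_of_ne hJle (fun h => hnot (h ▸ hPJ))
  have hnotJ1 : ¬ P (J + 1) := Nat.findGreatest_is_greatest (n := k) (by omega) (by omega)
  obtain ⟨a, b, hinj, hne⟩ := hPJ
  obtain ⟨ha, hb, hab⟩ := (sumElim_inj_iff a b).1 hinj
  refine ⟨J, hJlt, fun p => Sum.elim a b (finSumFinEquiv.symm p), ?_, ?_⟩
  · exact hinj.comp finSumFinEquiv.symm.injective
  · intro x y hxy
    by_contra hcon
    push_neg at hcon
    obtain ⟨hcx, hcy⟩ := hcon
    have hxa : ∀ i, a i ≠ x := by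
      intro i hi
      apply hcx (finSumFinEquiv (Sum.inl i))
      rw [Equiv.symm_apply_apply]
      exact hi
    have hxb : ∀ i, b i ≠ x := by
      intro i hi
      apply hcx (finSumFinEquiv (Sum.inr i))
      rw [Equiv.symm_apply_apply]
      exact hi
    have hya : ∀ i, a i ≠ y := by
      intro i hi
      apply hcy (finSumFinEquiv (Sum.inl i))
      rw [Equiv.symm_apply_apply]
      exact hi
    have hyb : ∀ i, b i ≠ y := by
      intro i hi
      apply hcy (finSumFinEquiv (Sum.inr i))
      rw [Equiv.symm_apply_apply]
      exact hi
    have hxyne : x ≠ y := fun h => hxy (h ▸ hrefl x)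
    apply hnotJ1
    refine ⟨Fin.snoc a x, Fin.snoc b y, ?_, ?_⟩
    · rw [sumElim_inj_iff]
      refine ⟨?_, ?_, ?_⟩
      · intro i i' h
        rcases Fin.eq_castSucc_or_eq_last i with ⟨i0, rfl⟩ | rfl <;>
          rcases Fin.eq_castSucc_or_eq_last i' with ⟨i0', rfl⟩ | rfl
        · rw [Fin.snoc_castSucc, Fin.snoc_castSucc] at h
          exact congrArg _ (ha h)
        · rw [Fin.snoc_castSucc, Fin.snoc_last] at h
          exact absurd h (hxa i0)
        · rw [Fin.snoc_last, Fin.snoc_castSucc] at h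
          exact absurd h.symm (hxa i0')
        · rfl
      · intro i i' h
        rcases Fin.eq_castSucc_or_eq_last i with ⟨i0, rfl⟩ | rfl <;>
          rcases Fin.eq_castSucc_or_eq_last i' with ⟨i0', rfl⟩ | rfl
        · rw [Fin.snoc_castSucc, Fin.snoc_castSucc] at h
          exact congrArg _ (hb h)
        · rw [Fin.snoc_castSucc, Fin.snoc_last] at h
          exact absurd h (hyb i0)
        · rw [Fin.snoc_last, Fin.snoc_castSucc] at h
          exact absurd h.symm (hyb i0')
        · rfl
      · intro i i'
        rcases Fin.eq_castSucc_or_eq_last i with ⟨i0, rfl⟩ | rfl <;>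
          rcases Fin.eq_castSucc_or_eq_last i' with ⟨i0', rfl⟩ | rfl
        · rw [Fin.snoc_castSucc, Fin.snoc_castSucc]
          exact hab i0 i0'
        · rw [Fin.snoc_castSucc, Fin.snoc_last]
          exact hya i0
        · rw [Fin.snoc_last, Fin.snoc_castSucc]
          exact fun h => hxb i0' h.symm
        · rw [Fin.snoc_last, Fin.snoc_last]
          exact hxyne
    · intro i
      rcases Fin.eq_castSucc_or_eq_last i with ⟨i0, rfl⟩ | rfl
      · rw [Fin.snoc_castSucc, Fin.snoc_castSucc]
        exact hne i0
      · rw [Fin.snoc_last, Fin.snoc_last]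
        exact hxy

end Wqo

section Crux
open Function

lemma homle_N_of_big {n k : ℕ} (hkn : 2 * k < n) (F : FinBinRel)
    (hn : n ≤ F.n) (hdn : HDN F k) : HomLe (Ndigraph n k) F := by
  classical
  obtain ⟨a, b, hinj, hnon⟩ := hdn
  obtain ⟨ha, hb, hab⟩ := (sumElim_inj_iff a b).1 hinj
  have hrg : ∀ x : Fin F.n, x ∈ Set.range (Sum.elim a b) ↔
      ((∃ i, a i = x) ∨ (∃ i, b i = x)) := by
    intro x
    constructor
    · rintro ⟨s, rfl⟩
      cases s with
      | inl i => exact Or.inl ⟨i, rfl⟩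
      | inr i => exact Or.inr ⟨i, rfl⟩
    · rintro (⟨i, rfl⟩ | ⟨i, rfl⟩)
      · exact ⟨Sum.inl i, rfl⟩
      · exact ⟨Sum.inr i, rfl⟩
  have hcardp : Fintype.card {x : Fin F.n // (∃ i, a i = x) ∨ (∃ i, b i = x)} = k + k := by
    rw [← Fintype.card_congr ((Equiv.ofInjective _ hinj).trans
      (Equiv.subtypeEquivRight hrg))]
    simp
  have hcardC : Fintype.card {x : Fin F.n // ¬ ((∃ i, a i = x) ∨ (∃ i, b i = x))}
      = F.n - (k + k) := by
    rw [Fintype.card_subtype_compl, hcardp, Fintype.card_fin]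
  set ρ : {x : Fin F.n // ¬ ((∃ i, a i = x) ∨ (∃ i, b i = x))} ≃ Fin (F.n - (k + k)) :=
    Fintype.equivFinOfCardEq hcardC with hρ
  set f : Fin F.n → Fin n := fun x =>
    if h1 : ∃ i, a i = x then
      ⟨2 * (Classical.choose h1).val, by have := (Classical.choose h1).isLt; omega⟩
    else if h2 : ∃ i, b i = x then
      ⟨2 * (Classical.choose h2).val + 1, by have := (Classical.choose h2).isLt; omega⟩
    else
      ⟨(k + k) + min (ρ ⟨x, not_or.mpr ⟨h1, h2⟩⟩).val (n - (k + k) - 1), by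
        have := Nat.min_le_right (ρ ⟨x, not_or.mpr ⟨h1, h2⟩⟩).val (n - (k + k) - 1)
        omega⟩
    with hf
  have hfa : ∀ x (h1 : ∃ i, a i = x), (f x).val = 2 * (Classical.choose h1).val := by
    intro x h1
    simp only [hf, dif_pos h1]
  have hfb : ∀ x (h1 : ¬ ∃ i, a i = x) (h2 : ∃ i, b i = x),
      (f x).val = 2 * (Classical.choose h2).val + 1 := by
    intro x h1 h2
    simp only [hf, dif_neg h1, dif_pos h2]
  have hfc : ∀ x (h1 : ¬ ∃ i, a i = x) (h2 : ¬ ∃ i, b i = x),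
      (f x).val = (k + k) + min (ρ ⟨x, not_or.mpr ⟨h1, h2⟩⟩).val (n - (k + k) - 1) := by
    intro x h1 h2
    simp only [hf, dif_neg h1, dif_neg h2]
  refine ⟨f, ?_, ?_⟩
  · -- surjective
    intro t
    have htn : t.val < n := t.isLt
    by_cases hlt : t.val < k + k
    · rcases Nat.even_or_odd t.val with he | ho
      · obtain ⟨mm, hmm⟩ := he
        have hmmk : mm < k := by omega
        refine ⟨a ⟨mm, hmmk⟩, ?_⟩
        have h1 : ∃ i, a i = a ⟨mm, hmmk⟩ := ⟨_, rfl⟩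
        apply Fin.ext
        rw [hfa _ h1]
        have hch : Classical.choose h1 = ⟨mm, hmmk⟩ := ha (Classical.choose_spec h1)
        rw [hch]
        simp only [Fin.val_mk]
        omega
      · obtain ⟨mm, hmm⟩ := ho
        have hmmk : mm < k := by omega
        have h1 : ¬ ∃ i, a i = b ⟨mm, hmmk⟩ := by
          rintro ⟨i, hi⟩
          exact hab i _ hi
        have h2 : ∃ i, b i = b ⟨mm, hmmk⟩ := ⟨_, rfl⟩
        refine ⟨b ⟨mm, hmmk⟩, ?_⟩
        apply Fin.ext
        rw [hfb _ h1 h2]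
        have hch : Classical.choose h2 = ⟨mm, hmmk⟩ := hb (Classical.choose_spec h2)
        rw [hch]
        simp only [Fin.val_mk]
        omega
    · -- tail
      have hj : t.val - (k + k) < F.n - (k + k) := by
        have := t.isLt
        omega
      set z := ρ.symm ⟨t.val - (k + k), hj⟩ with hz
      have hz1 : ¬ ∃ i, a i = z.val := fun hcon => z.prop (Or.inl hcon)
      have hz2 : ¬ ∃ i, b i = z.val := fun hcon => z.prop (Or.inr hcon)
      refine ⟨z.val, ?_⟩
      apply Fin.ext
      rw [hfc _ hz1 hz2]
      have hzeta : (⟨z.val, not_or.mpr ⟨hz1, hz2⟩⟩ :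
          {x : Fin F.n // ¬ ((∃ i, a i = x) ∨ (∃ i, b i = x))}) = z := rfl
      rw [hzeta, hz, Equiv.apply_symm_apply]
      simp only [Fin.val_mk]
      have := t.isLt
      omega
  · -- homomorphism
    intro x y hrel
    rintro ⟨mm, hmk, hfx, hfy⟩
    -- x must be in the a-branch
    by_cases h1x : ∃ i, a i = x
    · rw [hfa _ h1x] at hfx
      by_cases h1y : ∃ i, a i = y
      · rw [hfa _ h1y] at hfy
        omega
      · by_cases h2y : ∃ i, b i = y
        · rw [hfb _ h1y h2y] at hfy
          have hax := Classical.choose_spec h1x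
          have hby := Classical.choose_spec h2y
          have hchoose_eq : Classical.choose h1x = Classical.choose h2y :=
            Fin.ext (by omega)
          apply hnon (Classical.choose h1x)
          rw [hax, hchoose_eq, hby]
          exact hrel
        · rw [hfc _ h1y h2y] at hfy
          omega
    · by_cases h2x : ∃ i, b i = x
      · rw [hfb _ h1x h2x] at hfx
        omega
      · rw [hfc _ h1x h2x] at hfx
        omega

open scoped Classical in
/-- the adjacency type of a vertex relative to the cover enumeration -/
noncomputable def typv (F : FinBinRel) {s : ℕ} (w : Fin s → Fin F.n) (v : Fin F.n) :
    Fin s → Bool × Bool :=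
  fun p => (decide (F.rel v (w p)), decide (F.rel (w p) v))

/-- number of outside vertices of a given type -/
noncomputable def cnt (F : FinBinRel) {s : ℕ} (w : Fin s → Fin F.n)
    (t : Fin s → Bool × Bool) : ℕ :=
  Nat.card {v : Fin F.n // (∀ p, w p ≠ v) ∧ typv F w v = t}

lemma crux (F F' : FinBinRel) (hrF : ∀ x, F.rel x x)
    {s : ℕ} (w : Fin s → Fin F.n) (w' : Fin s → Fin F'.n)
    (hw' : Function.Injective w')
    (hcov : ∀ x y, ¬ F.rel x y → (∃ p, w p = x) ∨ (∃ p, w p = y))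
    (htab : ∀ p q, F'.rel (w' p) (w' q) → F.rel (w p) (w q))
    (hle : ∀ t, cnt F w t ≤ cnt F' w' t)
    (hz : ∀ t, cnt F w t = 0 → cnt F' w' t = 0) :
    HomLe F F' := by
  classical
  have hcard : ∀ t, Nat.card {v : {u : Fin F.n // ∀ p, w p ≠ u} // typv F w v.val = t}
      = cnt F w t := fun t =>
    Nat.card_congr (Equiv.subtypeSubtypeEquivSubtypeInter
      (fun u : Fin F.n => ∀ p, w p ≠ u) (fun u => typv F w u = t))
  have hcard' : ∀ t, Nat.card {v : {u : Fin F'.n // ∀ p, w' p ≠ u} // typv F' w' v.val = t}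
      = cnt F' w' t := fun t =>
    Nat.card_congr (Equiv.subtypeSubtypeEquivSubtypeInter
      (fun u : Fin F'.n => ∀ p, w' p ≠ u) (fun u => typv F' w' u = t))
  obtain ⟨H, hHsurj, hHtyp⟩ := exists_surj_fiber
    (α := {u : Fin F'.n // ∀ p, w' p ≠ u}) (β := {u : Fin F.n // ∀ p, w p ≠ u})
    (fun v => typv F' w' v.val) (fun v => typv F w v.val)
    (fun t => by rw [hcard t, hcard' t]; exact hle t)
    (fun t => by rw [hcard t, hcard' t]; exact hz t)
  set g : Fin F'.n → Fin F.n := fun x =>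
    if h : ∃ p, w' p = x then w (Classical.choose h)
    else (H ⟨x, fun p hp => h ⟨p, hp⟩⟩).val with hg
  have hgpos : ∀ x (h : ∃ p, w' p = x), g x = w (Classical.choose h) := by
    intro x h
    simp only [hg, dif_pos h]
  have hgneg : ∀ x (h : ¬ ∃ p, w' p = x),
      g x = (H ⟨x, fun p hp => h ⟨p, hp⟩⟩).val := by
    intro x h
    simp only [hg, dif_neg h]
  refine ⟨g, ?_, ?_⟩
  · -- surjective
    intro y
    by_cases hy : ∃ p, w p = y
    · obtain ⟨p, hp⟩ := hy
      refine ⟨w' p, ?_⟩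
      have h : ∃ q, w' q = w' p := ⟨p, rfl⟩
      rw [hgpos _ h]
      have hch : Classical.choose h = p := hw' (Classical.choose_spec h)
      rw [hch, hp]
    · push_neg at hy
      obtain ⟨z, hzeq⟩ := hHsurj ⟨y, hy⟩
      refine ⟨z.val, ?_⟩
      have hnz : ¬ ∃ p, w' p = z.val := by
        rintro ⟨p, hp⟩
        exact z.prop p hp
      rw [hgneg _ hnz]
      have heta : (⟨z.val, fun p hp => hnz ⟨p, hp⟩⟩ :
          {u : Fin F'.n // ∀ p, w' p ≠ u}) = z := rfl
      rw [heta, hzeq]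
  · -- homomorphism
    intro x y hxy
    by_cases hx : ∃ p, w' p = x <;> by_cases hy : ∃ p, w' p = y
    · rw [hgpos _ hx, hgpos _ hy]
      apply htab
      rw [Classical.choose_spec hx, Classical.choose_spec hy]
      exact hxy
    · rw [hgpos _ hx, hgneg _ hy]
      have hty := hHtyp ⟨y, fun p hp => hy ⟨p, hp⟩⟩
      have h2 := congrArg Prod.snd (congrFun hty (Classical.choose hx))
      simp only [typv] at h2
      have hr : F'.rel (w' (Classical.choose hx)) y := by
        rw [Classical.choose_spec hx]
        exact hxy
      exact of_decide_eq_true (by rw [h2]; exact decide_eq_true hr)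
    · rw [hgneg _ hx, hgpos _ hy]
      have hty := hHtyp ⟨x, fun p hp => hx ⟨p, hp⟩⟩
      have h2 := congrArg Prod.fst (congrFun hty (Classical.choose hy))
      simp only [typv] at h2
      have hr : F'.rel x (w' (Classical.choose hy)) := by
        rw [Classical.choose_spec hy]
        exact hxy
      exact of_decide_eq_true (by rw [h2]; exact decide_eq_true hr)
    · rw [hgneg _ hx, hgneg _ hy]
      by_contra hcon
      rcases hcov _ _ hcon with ⟨p, hp⟩ | ⟨p, hp⟩
      · exact (H ⟨x, fun p hp => hx ⟨p, hp⟩⟩).prop p hp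
      · exact (H ⟨y, fun p hp => hy ⟨p, hp⟩⟩).prop p hp

end Crux

section Final
open Function

open scoped Classical in
/-- padded boolean adjacency table for graphs of size `< n` -/
noncomputable def padTab (n : ℕ) (F : FinBinRel) : Fin n → Fin n → Bool := fun p q =>
  if h : p.val < F.n ∧ q.val < F.n then decide (F.rel ⟨p.val, h.1⟩ ⟨q.val, h.2⟩) else false

lemma wqo_main {n k : ℕ} (hkn : 2 * k < n) (E : ℕ → FinBinRel)
    (hrefl : ∀ i, ∀ x : Fin (E i).n, (E i).rel x x)
    (hav : ∀ i, ¬ HomLe (Ndigraph n k) (E i)) :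
    ∃ i j, i < j ∧ HomLe (E i) (E j) := by
  classical
  by_cases hinf : {i | (E i).n < n}.Infinite
  · -- infinitely many small graphs: pigeonhole on the full table
    obtain ⟨φ, hφ, hsm⟩ := subseq_mem _ hinf
    have hsm' : ∀ i, (E (φ i)).n < n := hsm
    obtain ⟨ψ, t0, hψ, hconst⟩ := subseq_const
      (fun i => ((padTab n (E (φ i)), (⟨(E (φ i)).n, hsm' i⟩ : Fin n))))
    have hcode : (padTab n (E (φ (ψ 0))), (⟨(E (φ (ψ 0))).n, hsm' (ψ 0)⟩ : Fin n))
        = (padTab n (E (φ (ψ 1))), (⟨(E (φ (ψ 1))).n, hsm' (ψ 1)⟩ : Fin n)) :=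
      (hconst 0).trans (hconst 1).symm
    have hsz : (E (φ (ψ 0))).n = (E (φ (ψ 1))).n :=
      congrArg Fin.val (congrArg Prod.snd hcode)
    have htab : padTab n (E (φ (ψ 0))) = padTab n (E (φ (ψ 1))) :=
      congrArg Prod.fst hcode
    refine ⟨φ (ψ 0), φ (ψ 1), hφ (hψ (by omega)), ?_⟩
    refine ⟨fun x => ⟨x.val, by rw [hsz]; exact x.isLt⟩, ?_, ?_⟩
    · intro y
      refine ⟨⟨y.val, by rw [← hsz]; exact y.isLt⟩, ?_⟩
      apply Fin.ext
      rfl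
    · intro x y hxy
      have hx' : x.val < n := lt_trans x.isLt (hsm' (ψ 1))
      have hy' : y.val < n := lt_trans y.isLt (hsm' (ψ 1))
      have hx1 : x.val < (E (φ (ψ 1))).n := x.isLt
      have hy1 : y.val < (E (φ (ψ 1))).n := y.isLt
      have hx0 : x.val < (E (φ (ψ 0))).n := by rw [hsz]; exact x.isLt
      have hy0 : y.val < (E (φ (ψ 0))).n := by rw [hsz]; exact y.isLt
      have h1 : padTab n (E (φ (ψ 1))) ⟨x.val, hx'⟩ ⟨y.val, hy'⟩ = true := by
        simp only [padTab]
        rw [dif_pos (show ((⟨x.val, hx'⟩ : Fin n)).val < (E (φ (ψ 1))).n ∧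
          ((⟨y.val, hy'⟩ : Fin n)).val < (E (φ (ψ 1))).n from ⟨hx1, hy1⟩)]
        apply decide_eq_true
        show (E (φ (ψ 1))).rel ⟨x.val, hx1⟩ ⟨y.val, hy1⟩
        have : x = ⟨x.val, hx1⟩ := Fin.ext rfl
        rw [← this]
        have : y = ⟨y.val, hy1⟩ := Fin.ext rfl
        rw [← this]
        exact hxy
      rw [← htab] at h1
      have h2 := of_decide_eq_true (by
        simp only [padTab] at h1
        rw [dif_pos (show ((⟨x.val, hx'⟩ : Fin n)).val < (E (φ (ψ 0))).n ∧
          ((⟨y.val, hy'⟩ : Fin n)).val < (E (φ (ψ 0))).n from ⟨hx0, hy0⟩)] at h1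
        exact h1)
      exact h2
  · -- infinitely many big graphs
    have hbig : {i | n ≤ (E i).n}.Infinite := by
      have hfin : {i | (E i).n < n}.Finite := Set.not_infinite.1 hinf
      have heq : {i | n ≤ (E i).n} = {i | (E i).n < n}ᶜ := by
        ext i
        simp [not_lt]
      rw [heq]
      exact hfin.infinite_compl
    obtain ⟨φ0, hφ0, hbg⟩ := subseq_mem _ hbig
    have hbg' : ∀ i, n ≤ (E (φ0 i)).n := hbg
    have hnd : ∀ i, ¬ HDN (E (φ0 i)) k := fun i h =>
      hav (φ0 i) (homle_N_of_big hkn _ (hbg' i) h)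
    have hcov0 := fun i => exists_cover (E (φ0 i)) k (hrefl _) (hnd i)
    choose J hJ w hw hcover using hcov0
    -- make the cover size constant
    obtain ⟨φ1, t1, hφ1, hJc⟩ := subseq_const (fun i => (⟨J i, hJ i⟩ : Fin k))
    have hJeq : ∀ i, J (φ1 i) = t1.val := fun i => congrArg Fin.val (hJc i)
    set s := t1.val + t1.val with hs
    set w2 : ∀ i, Fin s → Fin (E (φ0 (φ1 i))).n := fun i p =>
      w (φ1 i) ⟨p.val, by have h1 := p.isLt; have h2 := hJeq i; omega⟩ with hw2
    have hw2inj : ∀ i, Function.Injective (w2 i) := by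
      intro i x y hxy
      simp only [hw2] at hxy
      have := hw (φ1 i) hxy
      have hv := congrArg Fin.val this
      exact Fin.ext hv
    have hcover2 : ∀ i x y, ¬ (E (φ0 (φ1 i))).rel x y →
        (∃ p, w2 i p = x) ∨ (∃ p, w2 i p = y) := by
      intro i x y hxy
      rcases hcover (φ1 i) x y hxy with ⟨p, hp⟩ | ⟨p, hp⟩
      · refine Or.inl ⟨⟨p.val, by have h1 := p.isLt; have h2 := hJeq i; omega⟩, ?_⟩
        simp only [hw2]
        rw [← hp]
      · refine Or.inr ⟨⟨p.val, by have h1 := p.isLt; have h2 := hJeq i; omega⟩, ?_⟩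
        simp only [hw2]
        rw [← hp]
    -- constant adjacency table on the cover
    obtain ⟨φ2, t2, hφ2, htabc⟩ := subseq_const
      (fun i => (fun p q => decide ((E (φ0 (φ1 i))).rel (w2 i p) (w2 i q)) :
        Fin s → Fin s → Bool))
    -- constant zero-pattern of type counts
    obtain ⟨φ3, t3, hφ3, hzc⟩ := subseq_const
      (fun i => (fun t => decide (cnt (E (φ0 (φ1 (φ2 i)))) (w2 (φ2 i)) t = 0) :
        (Fin s → Bool × Bool) → Bool))
    -- monotone subsequence of the count functions
    obtain ⟨φ4, hφ4, hmono⟩ := subseq_mono_pi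
      (fun i t => cnt (E (φ0 (φ1 (φ2 (φ3 i))))) (w2 (φ2 (φ3 i))) t)
    set A := φ2 (φ3 (φ4 0)) with hA
    set B := φ2 (φ3 (φ4 1)) with hB
    refine ⟨φ0 (φ1 A), φ0 (φ1 B), ?_, ?_⟩
    · apply hφ0
      apply hφ1
      apply hφ2
      apply hφ3
      exact hφ4 (by omega)
    · have htabAB : ∀ p q,
          decide ((E (φ0 (φ1 A))).rel (w2 A p) (w2 A q))
            = decide ((E (φ0 (φ1 B))).rel (w2 B p) (w2 B q)) := by
        intro p q
        have h1 := congrFun (congrFun (htabc (φ3 (φ4 0))) p) q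
        have h2 := congrFun (congrFun (htabc (φ3 (φ4 1))) p) q
        rw [h1, h2]
      have hcntz : ∀ t, cnt (E (φ0 (φ1 A))) (w2 A) t = 0 →
          cnt (E (φ0 (φ1 B))) (w2 B) t = 0 := by
        intro t
        have h1 := congrFun (hzc (φ4 0)) t
        have h2 := congrFun (hzc (φ4 1)) t
        intro h0
        have : decide (cnt (E (φ0 (φ1 A))) (w2 A) t = 0)
            = decide (cnt (E (φ0 (φ1 B))) (w2 B) t = 0) := by rw [h1, h2]
        exact (decide_eq_decide.1 this).1 h0
      have hcntle : ∀ t, cnt (E (φ0 (φ1 A))) (w2 A) t ≤ cnt (E (φ0 (φ1 B))) (w2 B) t :=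
        fun t => hmono t 0 1 (by omega)
      exact crux (E (φ0 (φ1 A))) (E (φ0 (φ1 B))) (hrefl _) (w2 A) (w2 B)
        (hw2inj B) (hcover2 A)
        (fun p q hpq => of_decide_eq_true (by rw [htabAB p q]; exact decide_eq_true hpq))
        hcntle hcntz

end Final

/-- For a reflexive digraph `D`, the avoidance class `Av(D)` within reflexive digraphs
under the homomorphic image ordering is well quasi-ordered iff `D` is a partial
subcomplete digraph `N⃗_{n,k}` with `2k < n`. -/
theorem stmt_18 (D : FinBinRel) (hD : ∀ x : Fin D.n, D.rel x x) :
    IsWqo HomLe {E | (∀ x : Fin E.n, E.rel x x) ∧ ¬ HomLe D E} ↔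
      ∃ n k, 2 * k < n ∧ BinIso D (Ndigraph n k) := by
  constructor
  · intro hwqo
    by_cases h1 : ∃ x y y', y ≠ y' ∧ ¬ D.rel x y ∧ ¬ D.rel x y'
    · exfalso
      obtain ⟨i, j, hij, hle⟩ := hwqo (fun t => Cyc (t + 3))
        (fun t => ⟨cyc_refl (by omega), cyc_avoid1 _ h1⟩)
      exact cyc_antichain (by omega) (by omega) hle
    by_cases h2 : ∃ x y y', y ≠ y' ∧ ¬ D.rel y x ∧ ¬ D.rel y' x
    · exfalso
      obtain ⟨i, j, hij, hle⟩ := hwqo (fun t => Cyc (t + 3))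
        (fun t => ⟨cyc_refl (by omega), cyc_avoid2 h2⟩)
      exact cyc_antichain (by omega) (by omega) hle
    by_cases h3 : ∃ x y z, ¬ D.rel x y ∧ ¬ D.rel z x
    · exfalso
      obtain ⟨i, j, hij, hle⟩ := hwqo (fun t => AltCyc (t + 3))
        (fun t => ⟨altCyc_refl (by omega), altCyc_avoid3 (by omega) h3⟩)
      exact altCyc_antichain (by omega) (by omega) hle
    by_cases h4 : ∀ x, ∃ y, ¬ D.rel x y ∨ ¬ D.rel y x
    · exfalso
      obtain ⟨i, j, hij, hle⟩ := hwqo (fun t => Cyc (t + 3))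
        (fun t => ⟨cyc_refl (by omega), cyc_avoid4 h4⟩)
      exact cyc_antichain (by omega) (by omega) hle
    · exact build_iso D hD h1 h2 h3 h4
  · rintro ⟨n, k, hkn, hiso⟩
    intro E hmem
    have hrefl : ∀ i, ∀ x : Fin (E i).n, (E i).rel x x := fun i => (hmem i).1
    have hav : ∀ i, ¬ HomLe (Ndigraph n k) (E i) := by
      intro i
      rw [← homLe_congr_left hiso]
      exact (hmem i).2
    exact wqo_main hkn E hrefl hav
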